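/- arXiv:1808.09624 — 3 statements merged into one kernel-verified Lean document; each statement's English description precedes it below -/
import Mathlib

section
/- Let Ω ⊆ ℝ^n be a domain with Lebesgue measure and let p_0, p_1, …, p_n be variable exponents on Ω. Let a : Ω × ℝ × ℝ^n → ℝ^n satisfy the coercivity condition a(x,s_0,s)·s ≥ ā·P(x,s) − φ(x) for a.e. x and all (s_0,s), where ā > 0 and 0 ≤ φ ∈ L_1(Ω); let b : Ω × ℝ × ℝ^n → ℝ satisfy b(x,s_0,s)·s_0 ≥ 0; let f ∈ L_1(Ω). Let u : Ω → ℝ and w : Ω → ℝ^n be measurable with B := b(·,u,w) ∈ L_1(Ω), and suppose that for every k > 0 the functions |u|^{p_0(x)−2}u·T_k(u) and χ_{{|u|<k}}·a(x,u,w)·w are integrable and the entropy inequality with test function ξ = 0 holds: ∫_Ω (B + |u|^{p_0(x)−2}u + f)·T_k(u) dx + ∫_{{x : |u|<k}} a(x,u,w)·w dx ≤ 0. Then for every k > 0: ā·∫_{{|u|<k}} P(x,w) dx + ∫_{{|u|<k}} |u|^{p_0(x)} dx + k·∫_{{|u|≥k}} |u|^{p_0(x)−1} dx ≤ k·‖f‖_{L_1(Ω)}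 + ‖φ‖_{L_1(Ω)}. -/
open MeasureTheory Filter Topology Real

noncomputable section

/-- A variable exponent on a set `Ω`: a continuous bounded function with infimum `> 1`
and supremum `< ∞`. -/
def IsVarExp {n : ℕ} (Ω : Set (Fin n → ℝ)) (p : (Fin n → ℝ) → ℝ) : Prop :=
  ContinuousOn p Ω ∧ ∃ pm pM : ℝ, 1 < pm ∧ ∀ x ∈ Ω, pm ≤ p x ∧ p x ≤ pM

/-- The conjugate exponent `p'(x) = p(x)/(p(x)-1)`. -/
def pConj {n : ℕ} (p : (Fin n → ℝ) → ℝ) (x : Fin n → ℝ) : ℝ := p x / (p x - 1)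

/-- Truncation at level `k`: `T_k(r) = max(-k, min(k, r))`. -/
def Tk (k r : ℝ) : ℝ := max (-k) (min k r)

/-- Euclidean-style dot product on `Fin n → ℝ`. -/
def dotP {n : ℕ} (s t : Fin n → ℝ) : ℝ := ∑ i, s i * t i

/-- The anisotropic modular integrand `P(x,s) = Σᵢ |sᵢ|^{pᵢ(x)}`. -/
def Pfun {n : ℕ} (p : Fin n → (Fin n → ℝ) → ℝ) (x s : Fin n → ℝ) : ℝ :=
  ∑ i, |s i| ^ p i x

/-- The modular `ρ_{p(·)}(v) = ∫_Ω |v(x)|^{p(x)} dx`. -/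
def modular {n : ℕ} (Ω : Set (Fin n → ℝ)) (p : (Fin n → ℝ) → ℝ)
    (v : (Fin n → ℝ) → ℝ) : ℝ :=
  ∫ x in Ω, |v x| ^ p x

/-- The Luxemburg norm `‖v‖_{p(·)} = inf { c > 0 : ρ_{p(·)}(v/c) ≤ 1 }`. -/
def luxNorm {n : ℕ} (Ω : Set (Fin n → ℝ)) (p : (Fin n → ℝ) → ℝ)
    (v : (Fin n → ℝ) → ℝ) : ℝ :=
  sInf {c : ℝ | 0 < c ∧ modular Ω p (fun x => v x / c) ≤ 1}

/-- Smooth compactly supported function with support inside `Ω`. -/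
def SmoothCpt {n : ℕ} (Ω : Set (Fin n → ℝ)) (φ : (Fin n → ℝ) → ℝ) : Prop :=
  ContDiff ℝ (⊤ : ℕ∞) φ ∧ HasCompactSupport φ ∧ tsupport φ ⊆ Ω

/-- `C¹` function compactly supported inside `Ω`. -/
def C01 {n : ℕ} (Ω : Set (Fin n → ℝ)) (ξ : (Fin n → ℝ) → ℝ) : Prop :=
  ContDiff ℝ 1 ξ ∧ HasCompactSupport ξ ∧ tsupport ξ ⊆ Ω

/-- The gradient of a scalar function on `ℝⁿ`. -/
def grad {n : ℕ} (ξ : (Fin n → ℝ) → ℝ) (x : Fin n → ℝ) : Fin n → ℝ :=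
  fun i => fderiv ℝ ξ x (Pi.single i 1)

/-- the a priori estimate for entropy solutions (Lemma 1 of the paper):
taking `ξ = 0` in the entropy inequality yields
`ā·∫_{|u|<k} P(x,w) + ∫_{|u|<k} |u|^{p₀(x)} + k·∫_{|u|≥k} |u|^{p₀(x)−1}
  ≤ k·‖f‖₁ + ‖φ‖₁`. -/
theorem entropy_solution_apriori_estimate
    {n : ℕ}
    (Ω : Set (Fin n → ℝ)) (hΩo : IsOpen Ω) (hΩc : IsConnected Ω)
    (p0 : (Fin n → ℝ) → ℝ) (p : Fin n → (Fin n → ℝ) → ℝ)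
    (hp0 : IsVarExp Ω p0) (hp : ∀ i, IsVarExp Ω (p i))
    (a : (Fin n → ℝ) → ℝ → (Fin n → ℝ) → (Fin n → ℝ))
    (abar : ℝ) (habar : 0 < abar)
    (φ : (Fin n → ℝ) → ℝ) (hφ_nonneg : ∀ x ∈ Ω, 0 ≤ φ x) (hφ_int : IntegrableOn φ Ω)
    (ha_coer : ∀ᵐ x ∂(volume.restrict Ω), ∀ (s0 : ℝ) (s : Fin n → ℝ),
      abar * Pfun p x s - φ x ≤ dotP (a x s0 s) s)
    (b : (Fin n → ℝ) → ℝ → (Fin n → ℝ) → ℝ)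
    (hb_sign : ∀ᵐ x ∂(volume.restrict Ω), ∀ (s0 : ℝ) (s : Fin n → ℝ),
      0 ≤ b x s0 s * s0)
    (f : (Fin n → ℝ) → ℝ) (hf : IntegrableOn f Ω)
    (u : (Fin n → ℝ) → ℝ) (w : (Fin n → ℝ) → Fin n → ℝ)
    (hu : Measurable u) (hw : Measurable w)
    (hB : IntegrableOn (fun x => b x (u x) (w x)) Ω)
    -- finiteness of the integrals appearing in the entropy inequality with ξ = 0
    (hint1 : ∀ k > (0:ℝ),
      IntegrableOn (fun x => |u x| ^ (p0 x - 2) * u x * Tk k (u x)) Ω)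
    (hint2 : ∀ k > (0:ℝ),
      IntegrableOn (fun x => dotP (a x (u x) (w x)) (w x)) (Ω ∩ {x | |u x| < k}))
    -- the entropy inequality with test function ξ = 0
    (hentropy : ∀ k > (0:ℝ),
      (∫ x in Ω,
          (b x (u x) (w x) + |u x| ^ (p0 x - 2) * u x + f x) * Tk k (u x)) +
        (∫ x in Ω ∩ {x | |u x| < k}, dotP (a x (u x) (w x)) (w x)) ≤ 0) :
    ∀ k > (0:ℝ),
      abar * (∫ x in Ω ∩ {x | |u x| < k}, Pfun p x (w x)) +
        (∫ x in Ω ∩ {x | |u x| < k}, |u x| ^ p0 x) +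
        k * (∫ x in Ω ∩ {x | k ≤ |u x|}, |u x| ^ (p0 x - 1)) ≤
      k * (∫ x in Ω, |f x|) + (∫ x in Ω, |φ x|) := by
  
  intro k hk
  -- sets
  set A : Set (Fin n → ℝ) := Ω ∩ {x | |u x| < k} with hA_def
  set C : Set (Fin n → ℝ) := Ω ∩ {x | k ≤ |u x|} with hC_def
  have hSlt : MeasurableSet {x | |u x| < k} := measurableSet_lt hu.abs measurable_const
  have hSge : MeasurableSet {x | k ≤ |u x|} := measurableSet_le measurable_const hu.abs
  have hAmeas : MeasurableSet A := hΩo.measurableSet.inter hSlt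
  have hCmeas : MeasurableSet C := hΩo.measurableSet.inter hSge
  have hAsub : A ⊆ Ω := Set.inter_subset_left
  have hCsub : C ⊆ Ω := Set.inter_subset_left
  have hUnion : Ω = A ∪ C := by
    ext x
    simp only [hA_def, hC_def, Set.mem_union, Set.mem_inter_iff, Set.mem_setOf_eq]
    constructor
    · intro hx
      rcases lt_or_ge (|u x|) k with h | h
      · exact Or.inl ⟨hx, h⟩
      · exact Or.inr ⟨hx, h⟩
    · rintro (⟨hx, _⟩ | ⟨hx, _⟩) <;> exact hx
  have hdisj : Disjoint A C := by
    apply Set.disjoint_left.mpr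
    rintro x ⟨-, hx1⟩ ⟨-, hx2⟩
    simp only [Set.mem_setOf_eq] at hx1 hx2
    exact absurd hx2 (not_le.mpr hx1)
  -- bounds on p0
  obtain ⟨hp0cont, pm, pM, hpm1, hpbd⟩ := hp0
  -- Tk basic facts
  have hTk_abs : ∀ r, |Tk k r| ≤ k := by
    intro r
    rw [abs_le]
    constructor
    · exact le_max_left _ _
    · exact max_le (by linarith) (min_le_left _ _)
  -- measurability of Tk ∘ u
  have hTkmeas : Measurable (fun x => Tk k (u x)) := by
    have : Continuous (Tk k) := continuous_const.max (continuous_const.min continuous_id)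
    exact this.measurable.comp hu
  -- pointwise identity for g := |u|^{p0-2} u Tk(u)
  have hg_int : IntegrableOn (fun x => |u x| ^ (p0 x - 2) * u x * Tk k (u x)) Ω := hint1 k hk
  have hgA : Set.EqOn (fun x => |u x| ^ (p0 x - 2) * u x * Tk k (u x))
      (fun x => |u x| ^ p0 x) A := by
    rintro x ⟨hxΩ, hxlt⟩
    simp only [Set.mem_setOf_eq] at hxlt
    by_cases hu0 : u x = 0
    · have hp0pos : 0 < p0 x := lt_trans zero_lt_one (lt_of_lt_of_le hpm1 (hpbd x hxΩ).1)
      simp [hu0, Real.zero_rpow (ne_of_gt hp0pos)]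
    · have habs : (0:ℝ) < |u x| := abs_pos.mpr hu0
      have hTku : Tk k (u x) = u x := by
        unfold Tk
        rw [abs_lt] at hxlt
        rw [min_eq_right hxlt.2.le, max_eq_right hxlt.1.le]
      simp only
      rw [hTku]
      have h2 : u x * u x = |u x| ^ (2:ℝ) := by
        rw [show ((2:ℝ)) = ((2:ℕ):ℝ) by norm_num, Real.rpow_natCast]
        rw [sq_abs]; ring
      rw [mul_assoc, h2, ← Real.rpow_add habs]
      ring_nf
  have hgC : Set.EqOn (fun x => |u x| ^ (p0 x - 2) * u x * Tk k (u x))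
      (fun x => k * |u x| ^ (p0 x - 1)) C := by
    rintro x ⟨hxΩ, hxge⟩
    simp only [Set.mem_setOf_eq] at hxge
    have habs : (0:ℝ) < |u x| := lt_of_lt_of_le hk hxge
    have key : u x * Tk k (u x) = k * |u x| := by
      unfold Tk
      rcases le_or_gt (u x) 0 with hneg | hpos
      · have huval : u x ≤ -k := by
          rw [abs_of_nonpos hneg] at hxge; linarith
        rw [min_eq_right (by linarith), max_eq_left huval, abs_of_nonpos hneg]; ring
      · have huval : k ≤ u x := by rw [abs_of_pos hpos] at hxge; exact hxge
        rw [min_eq_left huval, max_eq_right (by linarith), abs_of_pos hpos]; ring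
    simp only
    rw [mul_assoc, key]
    rw [show p0 x - 1 = (p0 x - 2) + 1 by ring, Real.rpow_add_one (ne_of_gt habs)]
    ring
  -- split ∫_Ω g
  have hsplit : (∫ x in Ω, |u x| ^ (p0 x - 2) * u x * Tk k (u x)) =
      (∫ x in A, |u x| ^ p0 x) + k * (∫ x in C, |u x| ^ (p0 x - 1)) := by
    rw [hUnion] at hg_int ⊢
    rw [setIntegral_union hdisj hCmeas (hg_int.mono_set Set.subset_union_left)
      (hg_int.mono_set Set.subset_union_right)]
    rw [setIntegral_congr_fun hAmeas hgA, setIntegral_congr_fun hCmeas hgC,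
      integral_const_mul]
  -- integrability of the three summands in the entropy integral
  have hBTk : IntegrableOn (fun x => b x (u x) (w x) * Tk k (u x)) Ω := by
    have := hB.bdd_mul (f := fun x => Tk k (u x))
      (c := k)
      (hTkmeas.aestronglyMeasurable) (Filter.Eventually.of_forall fun x => by simpa using hTk_abs (u x))
    simpa [mul_comm, IntegrableOn] using this
  have hfTk : IntegrableOn (fun x => f x * Tk k (u x)) Ω := by
    have := hf.bdd_mul (f := fun x => Tk k (u x))
      (c := k)
      (hTkmeas.aestronglyMeasurable) (Filter.Eventually.of_forall fun x => by simpa using hTk_abs (u x))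
    simpa [mul_comm, IntegrableOn] using this
  -- split the entropy integral
  have hent := hentropy k hk
  have hsplit2 : (∫ x in Ω,
      (b x (u x) (w x) + |u x| ^ (p0 x - 2) * u x + f x) * Tk k (u x)) =
      (∫ x in Ω, b x (u x) (w x) * Tk k (u x)) +
      (∫ x in Ω, |u x| ^ (p0 x - 2) * u x * Tk k (u x)) +
      (∫ x in Ω, f x * Tk k (u x)) := by
    have heq : (fun x => (b x (u x) (w x) + |u x| ^ (p0 x - 2) * u x + f x) * Tk k (u x)) =
        fun x => (b x (u x) (w x) * Tk k (u x) + |u x| ^ (p0 x - 2) * u x * Tk k (u x))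
          + f x * Tk k (u x) := by
      ext x; ring
    have hsum : Integrable (fun x => b x (u x) (w x) * Tk k (u x) +
        |u x| ^ (p0 x - 2) * u x * Tk k (u x)) (volume.restrict Ω) := hBTk.add hg_int
    rw [heq, integral_add hsum hfTk, integral_add hBTk hg_int]
  -- B·Tk ≥ 0
  have hBTk_nonneg : 0 ≤ ∫ x in Ω, b x (u x) (w x) * Tk k (u x) := by
    apply integral_nonneg_of_ae
    filter_upwards [hb_sign] with x hx
    have h1 := hx (u x) (w x)
    rcases lt_trichotomy (u x) 0 with hneg | hzero | hpos
    · have hb_le : b x (u x) (w x) ≤ 0 := by nlinarith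
      have hTk_le : Tk k (u x) ≤ 0 :=
        max_le (by linarith) (le_trans (min_le_right _ _) hneg.le)
      exact mul_nonneg_of_nonpos_of_nonpos hb_le hTk_le
    · have hTk0 : Tk k (u x) = 0 := by
        simp [Tk, hzero, min_eq_right hk.le, max_eq_right (neg_nonpos.mpr hk.le)]
      simp [hTk0]
    · have hb_ge : 0 ≤ b x (u x) (w x) := by nlinarith
      have hTk_ge : 0 ≤ Tk k (u x) := le_max_of_le_right (le_min hk.le hpos.le)
      exact mul_nonneg hb_ge hTk_ge
  -- f·Tk ≥ -k ∫ |f|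
  have hfTk_bound : -(k * ∫ x in Ω, |f x|) ≤ ∫ x in Ω, f x * Tk k (u x) := by
    have h1 := norm_integral_le_integral_norm (μ := volume.restrict Ω)
      (f := fun x => f x * Tk k (u x))
    simp only [Real.norm_eq_abs] at h1
    have h2 : (∫ x in Ω, |f x * Tk k (u x)|) ≤ ∫ x in Ω, k * |f x| := by
      apply integral_mono hfTk.abs (hf.abs.const_mul k)
      intro x
      simp only [abs_mul]
      calc |f x| * |Tk k (u x)| ≤ |f x| * k :=
            mul_le_mul_of_nonneg_left (hTk_abs (u x)) (abs_nonneg _)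
        _ = k * |f x| := by ring
    rw [integral_const_mul] at h2
    exact (abs_le.mp (h1.trans h2)).1
  -- coercivity on A
  have haw_int : IntegrableOn (fun x => dotP (a x (u x) (w x)) (w x)) A := hint2 k hk
  have hφA : IntegrableOn φ A := hφ_int.mono_set hAsub
  have hcoerA : ∀ᵐ x ∂(volume.restrict A),
      abar * Pfun p x (w x) - φ x ≤ dotP (a x (u x) (w x)) (w x) := by
    filter_upwards [ae_restrict_of_ae_restrict_of_subset hAsub ha_coer] with x hx
    exact hx (u x) (w x)
  have hPmeas : AEMeasurable (fun x => Pfun p x (w x)) (volume.restrict A) := by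
    unfold Pfun
    apply Finset.aemeasurable_fun_sum
    intro i _
    have hpi : AEMeasurable (p i) (volume.restrict A) :=
      (((hp i).1).aemeasurable hΩo.measurableSet).mono_measure
        (Measure.restrict_mono hAsub le_rfl)
    exact (((measurable_pi_apply i).comp hw).abs.aemeasurable).pow hpi
  have hP_nonneg : ∀ x, 0 ≤ Pfun p x (w x) := by
    intro x
    apply Finset.sum_nonneg
    intro i _
    positivity
  have hP_int : IntegrableOn (fun x => Pfun p x (w x)) A := by
    have hmaj : Integrable
        (fun x => (dotP (a x (u x) (w x)) (w x) + φ x) / abar) (volume.restrict A) :=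
      (haw_int.add hφA).div_const abar
    apply Integrable.mono' hmaj hPmeas.aestronglyMeasurable
    filter_upwards [hcoerA] with x hx
    rw [Real.norm_eq_abs, abs_of_nonneg (hP_nonneg x), le_div_iff₀ habar]
    nlinarith
  have hcoer_int : abar * (∫ x in A, Pfun p x (w x)) - (∫ x in A, φ x) ≤
      ∫ x in A, dotP (a x (u x) (w x)) (w x) := by
    have hsub : Integrable (fun x => abar * Pfun p x (w x) - φ x) (volume.restrict A) :=
      (hP_int.const_mul abar).sub hφA
    have h := integral_mono_ae hsub haw_int hcoerA
    rwa [integral_sub (hP_int.const_mul abar) hφA, integral_const_mul] at h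
  -- ∫_A φ ≤ ∫_Ω φ = ∫_Ω |φ|
  have hφ_mono : (∫ x in A, φ x) ≤ ∫ x in Ω, φ x := by
    apply setIntegral_mono_set hφ_int ?_ (HasSubset.Subset.eventuallyLE hAsub)
    filter_upwards [ae_restrict_mem hΩo.measurableSet] with x hx using hφ_nonneg x hx
  have hφ_eq : (∫ x in Ω, φ x) = ∫ x in Ω, |φ x| :=
    setIntegral_congr_fun hΩo.measurableSet
      (fun x hx => (abs_of_nonneg (hφ_nonneg x hx)).symm)
  -- assemble
  rw [hsplit2, ← hA_def] at hent
  linarith [hent, hsplit, hBTk_nonneg, hfTk_bound, hcoer_int, hφ_mono, hφ_eq]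
end
end

section
/- Let Ω ⊆ ℝ^n be a domain with Lebesgue measure and p_0, p_1, …, p_n variable exponents on Ω. Let a : Ω × ℝ × ℝ^n → ℝ^n satisfy a(x,s_0,s)·s ≥ ā·P(x,s) − φ(x) with ā > 0 and 0 ≤ φ ∈ L_1(Ω); let b : Ω × ℝ × ℝ^n → ℝ satisfy b(x,s_0,s)·s_0 ≥ 0; let f ∈ L_1(Ω). Let u : Ω → ℝ and w : Ω → ℝ^n be measurable with B := b(·,u,w) ∈ L_1(Ω) and meas{ |u| ≥ h } → 0 as h → ∞, and suppose that for all k, h > 0 all integrals below are finite and the entropy inequality with test function ξ = T_h(u) holds: ∫_Ω (B + |u|^{p_0(x)−2}u + f)·T_{k,h}(u) dx + ∫_{{x : h ≤ |u| < k+h}} a(x,u,w)·w dx ≤ 0, where T_{k,h}(r) = T_k(r − T_h(r)). Then for every k > 0: lim_{h→∞} ∫_{{x : h ≤ |u| < k+h}} P(x,w) dx = 0. -/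
open MeasureTheory Filter Topology Real

noncomputable section

/-- The double truncation `T_{k,h}(r) = T_k(r − T_h(r))`. -/
def Tkh (k h r : ℝ) : ℝ := Tk k (r - Tk h r)


open Set in
private lemma Tk_le_self {h r : ℝ} (hh : 0 ≤ h) (hr : 0 ≤ r) : Tk h r ≤ r :=
  max_le (by linarith) (min_le_right _ _)

private lemma self_le_Tk {h r : ℝ} (hh : 0 ≤ h) (hr : r ≤ 0) : r ≤ Tk h r := by
  rw [Tk, min_eq_right (le_trans hr hh)]; exact le_max_right _ _

private lemma Tkh_nonneg {k h r : ℝ} (hk : 0 ≤ k) (hh : 0 ≤ h) (hr : 0 ≤ r) :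
    0 ≤ Tkh k h r := by
  have h1 : Tk h r ≤ r := Tk_le_self hh hr
  exact le_max_of_le_right (le_min hk (by linarith))

private lemma Tkh_nonpos {k h r : ℝ} (hk : 0 ≤ k) (hh : 0 ≤ h) (hr : r ≤ 0) :
    Tkh k h r ≤ 0 := by
  have h1 : r ≤ Tk h r := self_le_Tk hh hr
  exact max_le (by linarith) (le_trans (min_le_right _ _) (by linarith))

private lemma abs_Tkh_le {k h r : ℝ} (hk : 0 ≤ k) : |Tkh k h r| ≤ k := by
  rw [abs_le]
  exact ⟨le_max_left _ _, max_le (by linarith) (min_le_left _ _)⟩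

private lemma Tkh_eq_zero {k h r : ℝ} (hk : 0 ≤ k) (hr : |r| < h) : Tkh k h r = 0 := by
  rw [abs_lt] at hr
  have : Tk h r = r := by
    rw [Tk, min_eq_right hr.2.le, max_eq_right (by linarith)]
  rw [Tkh, this, sub_self, Tk, min_eq_right hk, max_eq_right (by linarith)]

private lemma mul_Tkh_nonneg {k h r : ℝ} (hk : 0 ≤ k) (hh : 0 ≤ h) :
    0 ≤ r * Tkh k h r := by
  rcases le_total 0 r with hr | hr
  · exact mul_nonneg hr (Tkh_nonneg hk hh hr)
  · exact mul_nonneg_of_nonpos_of_nonpos hr (Tkh_nonpos hk hh hr)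

private lemma sign_mul_Tkh_nonneg {k h r b : ℝ} (hk : 0 ≤ k) (hh : 0 ≤ h)
    (hb : 0 ≤ b * r) : 0 ≤ b * Tkh k h r := by
  rcases lt_trichotomy r 0 with hr | hr | hr
  · have hb' : b ≤ 0 := by
      by_contra hcon
      push_neg at hcon
      nlinarith
    exact mul_nonneg_of_nonpos_of_nonpos hb' (Tkh_nonpos hk hh hr.le)
  · subst hr
    have h0 : Tk h 0 = 0 := by rw [Tk, min_eq_right hh, max_eq_right (by linarith)]
    rw [Tkh, h0, sub_self, Tk, min_eq_right hk, max_eq_right (by linarith), mul_zero]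
  · have hb' : 0 ≤ b := by
      by_contra hcon
      push_neg at hcon
      nlinarith
    exact mul_nonneg hb' (Tkh_nonneg hk hh hr.le)

/-- Lemma 3 of the paper: for an entropy solution, the energy over the
annuli `{h ≤ |u| < k+h}` vanishes as `h → ∞`. -/
theorem annulus_energy_tendsto_zero
    {n : ℕ}
    (Ω : Set (Fin n → ℝ)) (hΩo : IsOpen Ω) (hΩc : IsConnected Ω)
    (p0 : (Fin n → ℝ) → ℝ) (p : Fin n → (Fin n → ℝ) → ℝ)
    (hp0 : IsVarExp Ω p0) (hp : ∀ i, IsVarExp Ω (p i))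
    (a : (Fin n → ℝ) → ℝ → (Fin n → ℝ) → (Fin n → ℝ))
    (abar : ℝ) (habar : 0 < abar)
    (φ : (Fin n → ℝ) → ℝ) (hφ_nonneg : ∀ x ∈ Ω, 0 ≤ φ x) (hφ_int : IntegrableOn φ Ω)
    (ha_coer : ∀ᵐ x ∂(volume.restrict Ω), ∀ (s0 : ℝ) (s : Fin n → ℝ),
      abar * Pfun p x s - φ x ≤ dotP (a x s0 s) s)
    (b : (Fin n → ℝ) → ℝ → (Fin n → ℝ) → ℝ)
    (hb_sign : ∀ᵐ x ∂(volume.restrict Ω), ∀ (s0 : ℝ) (s : Fin n → ℝ),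
      0 ≤ b x s0 s * s0)
    (f : (Fin n → ℝ) → ℝ) (hf : IntegrableOn f Ω)
    (u : (Fin n → ℝ) → ℝ) (w : (Fin n → ℝ) → Fin n → ℝ)
    (hu : Measurable u) (hw : Measurable w)
    (hB : IntegrableOn (fun x => b x (u x) (w x)) Ω)
    -- the tails of u have vanishing measure
    (htail : Tendsto (fun h : ℝ => volume (Ω ∩ {x | h ≤ |u x|})) atTop (𝓝 0))
    -- finiteness of the integrals in the entropy inequality with ξ = T_h(u)
    (hint1 : ∀ k > (0:ℝ), ∀ h > (0:ℝ),
      IntegrableOn (fun x =>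
        (b x (u x) (w x) + |u x| ^ (p0 x - 2) * u x + f x) * Tkh k h (u x)) Ω)
    (hint2 : ∀ k > (0:ℝ), ∀ h > (0:ℝ),
      IntegrableOn (fun x => dotP (a x (u x) (w x)) (w x))
        (Ω ∩ {x | h ≤ |u x| ∧ |u x| < k + h}))
    -- the entropy inequality with test function ξ = T_h(u)
    (hentropy : ∀ k > (0:ℝ), ∀ h > (0:ℝ),
      (∫ x in Ω,
          (b x (u x) (w x) + |u x| ^ (p0 x - 2) * u x + f x) * Tkh k h (u x)) +
        (∫ x in Ω ∩ {x | h ≤ |u x| ∧ |u x| < k + h},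
          dotP (a x (u x) (w x)) (w x)) ≤ 0) :
    ∀ k > (0:ℝ),
      Tendsto (fun h : ℝ =>
          ∫ x in Ω ∩ {x | h ≤ |u x| ∧ |u x| < k + h}, Pfun p x (w x))
        atTop (𝓝 0) := by
  intro k hk
  set S : ℝ → Set (Fin n → ℝ) := fun h => {x | h ≤ |u x|} with hSdef
  set A : ℝ → Set (Fin n → ℝ) := fun h => {x | h ≤ |u x| ∧ |u x| < k + h} with hAdef
  have hSmeas : ∀ h : ℝ, MeasurableSet (S h) := fun h =>
    measurableSet_le measurable_const hu.abs
  have hAmeas : ∀ h : ℝ, MeasurableSet (A h) := fun h =>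
    (measurableSet_le measurable_const hu.abs).inter
      (measurableSet_lt hu.abs measurable_const)
  have hAsubS : ∀ h : ℝ, A h ⊆ S h := fun h x hx => hx.1
  have hPnonneg : ∀ (x : Fin n → ℝ) (s : Fin n → ℝ), 0 ≤ Pfun p x s := fun x s =>
    Finset.sum_nonneg fun i _ => Real.rpow_nonneg (abs_nonneg _) _
  -- measurability of the modular integrand
  have hPmeas : AEMeasurable (fun x => Pfun p x (w x)) (volume.restrict Ω) := by
    apply Finset.aemeasurable_fun_sum
    intro i _
    exact (((measurable_pi_apply i).comp hw).abs.aemeasurable).pow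
      (((hp i).1).aemeasurable hΩo.measurableSet)
  -- the key quantitative estimate
  have key : ∀ h : ℝ, 0 < h →
      abar * (∫ x in Ω ∩ A h, Pfun p x (w x)) ≤
        (∫ x in Ω ∩ A h, φ x) + k * ∫ x in Ω ∩ S h, |f x| := by
    intro h hh
    have hD : IntegrableOn (fun x => dotP (a x (u x) (w x)) (w x)) (Ω ∩ A h) :=
      hint2 k hk h hh
    have hφA : IntegrableOn φ (Ω ∩ A h) := hφ_int.mono_set Set.inter_subset_left
    have hcoerA : ∀ᵐ x ∂(volume.restrict (Ω ∩ A h)),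
        abar * Pfun p x (w x) - φ x ≤ dotP (a x (u x) (w x)) (w x) := by
      filter_upwards [ae_restrict_of_ae_restrict_of_subset Set.inter_subset_left ha_coer]
        with x hx
      exact hx (u x) (w x)
    have hPmeasA : AEMeasurable (fun x => Pfun p x (w x)) (volume.restrict (Ω ∩ A h)) :=
      hPmeas.mono_measure (Measure.restrict_mono Set.inter_subset_left le_rfl)
    have hPA : IntegrableOn (fun x => Pfun p x (w x)) (Ω ∩ A h) := by
      apply Integrable.mono' ((hD.add hφA).div_const abar) hPmeasA.aestronglyMeasurable
      filter_upwards [hcoerA] with x hx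
      rw [Real.norm_eq_abs, abs_of_nonneg (hPnonneg x (w x)), le_div_iff₀ habar]
      simp only [Pi.add_apply]
      linarith
    have step2 : (∫ x in Ω ∩ A h, abar * Pfun p x (w x)) ≤
        ∫ x in Ω ∩ A h, (dotP (a x (u x) (w x)) (w x) + φ x) := by
      apply integral_mono_ae (hPA.const_mul abar) (hD.add hφA)
      filter_upwards [hcoerA] with x hx
      simp only [Pi.add_apply]
      linarith
    have step3 : (∫ x in Ω ∩ A h, (dotP (a x (u x) (w x)) (w x) + φ x)) =
        (∫ x in Ω ∩ A h, dotP (a x (u x) (w x)) (w x)) + ∫ x in Ω ∩ A h, φ x :=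
      integral_add hD hφA
    -- entropy inequality gives a bound on the dot-product integral
    have hent := hentropy k hk h hh
    have hbound : (∫ x in Ω,
          -((b x (u x) (w x) + |u x| ^ (p0 x - 2) * u x + f x) * Tkh k h (u x))) ≤
        ∫ x in Ω, Set.indicator (S h) (fun x => k * |f x|) x := by
      apply integral_mono_ae (hint1 k hk h hh).neg
        (((hf.norm.const_mul k).indicator (hSmeas h)))
      filter_upwards [hb_sign] with x hbx
      simp only [Pi.neg_apply, Real.norm_eq_abs]
      have hbt : 0 ≤ b x (u x) (w x) * Tkh k h (u x) :=
        sign_mul_Tkh_nonneg hk.le hh.le (hbx (u x) (w x))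
      have hrt : 0 ≤ u x * Tkh k h (u x) := mul_Tkh_nonneg hk.le hh.le
      have hpt : 0 ≤ |u x| ^ (p0 x - 2) * u x * Tkh k h (u x) := by
        rw [mul_assoc]
        exact mul_nonneg (Real.rpow_nonneg (abs_nonneg _) _) hrt
      have expand : (b x (u x) (w x) + |u x| ^ (p0 x - 2) * u x + f x) * Tkh k h (u x) =
          b x (u x) (w x) * Tkh k h (u x) + |u x| ^ (p0 x - 2) * u x * Tkh k h (u x) +
            f x * Tkh k h (u x) := by ring
      rcases lt_or_ge |u x| h with hcase | hcase
      · have ht0 : Tkh k h (u x) = 0 := Tkh_eq_zero hk.le hcase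
        rw [expand, ht0]
        simp only [mul_zero, add_zero, neg_zero, zero_add]
        exact Set.indicator_nonneg (fun y _ => mul_nonneg hk.le (abs_nonneg _)) x
      · have hxS : x ∈ S h := hcase
        rw [Set.indicator_of_mem hxS]
        have h1 : -(f x * Tkh k h (u x)) ≤ k * |f x| := by
          calc -(f x * Tkh k h (u x)) ≤ |f x * Tkh k h (u x)| := neg_le_abs _
          _ = |f x| * |Tkh k h (u x)| := abs_mul _ _
          _ ≤ |f x| * k := mul_le_mul_of_nonneg_left (abs_Tkh_le hk.le) (abs_nonneg _)
          _ = k * |f x| := mul_comm _ _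
        rw [expand]
        linarith
    have hneg : (∫ x in Ω,
          -((b x (u x) (w x) + |u x| ^ (p0 x - 2) * u x + f x) * Tkh k h (u x))) =
        -∫ x in Ω, (b x (u x) (w x) + |u x| ^ (p0 x - 2) * u x + f x) * Tkh k h (u x) :=
      integral_neg _
    have hind : (∫ x in Ω, Set.indicator (S h) (fun x => k * |f x|) x) =
        k * ∫ x in Ω ∩ S h, |f x| := by
      rw [integral_indicator (hSmeas h), Measure.restrict_restrict (hSmeas h),
        Set.inter_comm, integral_const_mul]
    have hDbound : (∫ x in Ω ∩ A h, dotP (a x (u x) (w x)) (w x)) ≤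
        k * ∫ x in Ω ∩ S h, |f x| := by
      rw [hneg, hind] at hbound
      linarith
    calc abar * (∫ x in Ω ∩ A h, Pfun p x (w x))
        = ∫ x in Ω ∩ A h, abar * Pfun p x (w x) := (integral_const_mul abar _).symm
      _ ≤ (∫ x in Ω ∩ A h, dotP (a x (u x) (w x)) (w x)) + ∫ x in Ω ∩ A h, φ x := by
          rw [← step3]; exact step2
      _ ≤ (∫ x in Ω ∩ A h, φ x) + k * ∫ x in Ω ∩ S h, |f x| := by linarith
  -- measure of the tail sets under the restricted measure tends to zero
  have hμS : Tendsto (fun h : ℝ => (volume.restrict Ω) (S h)) atTop (𝓝 0) := by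
    have heq : (fun h : ℝ => (volume.restrict Ω) (S h)) =
        fun h : ℝ => volume (Ω ∩ {x | h ≤ |u x|}) := by
      funext h
      rw [Measure.restrict_apply (hSmeas h), Set.inter_comm]
    rw [heq]
    exact htail
  have hμA : Tendsto (fun h : ℝ => (volume.restrict Ω) (A h)) atTop (𝓝 0) := by
    refine tendsto_of_tendsto_of_tendsto_of_le_of_le tendsto_const_nhds hμS
      (fun h => zero_le) (fun h => measure_mono (hAsubS h))
  -- the two integral error terms tend to zero
  have hI1 : Tendsto (fun h : ℝ => ∫ x in Ω ∩ S h, |f x|) atTop (𝓝 0) := by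
    have := hf.norm.tendsto_setIntegral_nhds_zero hμS
    have heq : (fun h : ℝ => ∫ x in S h, ‖f x‖ ∂(volume.restrict Ω)) =
        fun h : ℝ => ∫ x in Ω ∩ S h, |f x| := by
      funext h
      rw [Measure.restrict_restrict (hSmeas h), Set.inter_comm]
      simp [Real.norm_eq_abs]
    rwa [heq] at this
  have hI2 : Tendsto (fun h : ℝ => ∫ x in Ω ∩ A h, φ x) atTop (𝓝 0) := by
    have := hφ_int.tendsto_setIntegral_nhds_zero hμA
    have heq : (fun h : ℝ => ∫ x in A h, φ x ∂(volume.restrict Ω)) =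
        fun h : ℝ => ∫ x in Ω ∩ A h, φ x := by
      funext h
      rw [Measure.restrict_restrict (hAmeas h), Set.inter_comm]
    rwa [heq] at this
  -- squeeze
  have hG : Tendsto (fun h : ℝ =>
      ((∫ x in Ω ∩ A h, φ x) + k * ∫ x in Ω ∩ S h, |f x|) / abar) atTop (𝓝 0) := by
    have := (hI2.add (hI1.const_mul k)).div_const abar
    simpa using this
  refine tendsto_of_tendsto_of_tendsto_of_le_of_le' tendsto_const_nhds hG ?_ ?_
  · exact Eventually.of_forall fun h =>
      setIntegral_nonneg ((hΩo.measurableSet).inter (hAmeas h))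
        (fun x _ => hPnonneg x (w x))
  · filter_upwards [eventually_gt_atTop (0 : ℝ)] with h hh
    rw [le_div_iff₀ habar]
    have := key h hh
    linarith
end
end

section
/- Let Q ⊆ ℝ^n be a (possibly unbounded) domain with Lebesgue measure and let p be a variable exponent on Q. Let v^j (j ∈ ℕ) and v be measurable functions on Q such that the sequence (v^j) is bounded in L_{p(·)}(Q) (i.e. sup_j ‖v^j‖_{p(·)} < ∞) and v^j → v almost everywhere in Q as j → ∞. Then v ∈ L_{p(·)}(Q) and v^j converges to v weakly in L_{p(·)}(Q), that is, for every g with ∫_Q |g(x)|^{p'(x)} dx < ∞ one has ∫_Q v^j g dx → ∫_Q v g dx as j → ∞. -/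
open MeasureTheory Filter Topology Real

noncomputable section

open scoped ENNReal

set_option maxHeartbeats 1000000

/-- Lemma 4 of the paper: a sequence bounded in `L_{p(·)}(Q)` that
converges a.e. converges weakly in `L_{p(·)}(Q)`. -/
theorem ae_convergence_and_boundedness_implies_weak_convergence
    {n : ℕ}
    (Q : Set (Fin n → ℝ)) (hQo : IsOpen Q) (hQc : IsConnected Q)
    (p : (Fin n → ℝ) → ℝ) (hp : IsVarExp Q p)
    (v : ℕ → (Fin n → ℝ) → ℝ) (vlim : (Fin n → ℝ) → ℝ)
    (hv_meas : ∀ j, Measurable (v j)) (hvlim_meas : Measurable vlim)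
    -- each v j belongs to L_{p(·)}(Q) and the sequence is norm bounded
    (hv_mem : ∀ j, IntegrableOn (fun x => |v j x| ^ p x) Q)
    (hv_bdd : ∃ C : ℝ, ∀ j, luxNorm Q p (v j) ≤ C)
    -- a.e. convergence
    (hae : ∀ᵐ x ∂(volume.restrict Q), Tendsto (fun j => v j x) atTop (𝓝 (vlim x))) :
    -- the limit belongs to L_{p(·)}(Q) ...
    IntegrableOn (fun x => |vlim x| ^ p x) Q ∧
    -- ... and the convergence is weak: testing against any g ∈ L_{p'(·)}(Q)
    (∀ g : (Fin n → ℝ) → ℝ, Measurable g →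
      IntegrableOn (fun x => |g x| ^ pConj p x) Q →
      Tendsto (fun j => ∫ x in Q, v j x * g x) atTop
        (𝓝 (∫ x in Q, vlim x * g x))) := by
  classical
  obtain ⟨hp_cont, pm, pM0, hpm, hpb0⟩ := hp
  have hQm : MeasurableSet Q := hQo.measurableSet
  set pM : ℝ := max pM0 pm with hpMdef
  have hpb : ∀ x ∈ Q, pm ≤ p x ∧ p x ≤ pM := fun x hx =>
    ⟨(hpb0 x hx).1, le_trans (hpb0 x hx).2 (le_max_left _ _)⟩
  have hpm0 : (0:ℝ) < pm := lt_trans one_pos hpm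
  have haeQ : ∀ᵐ x ∂(volume.restrict Q), x ∈ Q := ae_restrict_mem hQm
  have hpae : AEMeasurable p (volume.restrict Q) := hp_cont.aemeasurable hQm
  have hmeasPow : ∀ (w : (Fin n → ℝ) → ℝ), Measurable w → ∀ c : ℝ,
      AEMeasurable (fun x => |w x / c| ^ p x) (volume.restrict Q) := by
    intro w hw c
    exact ((hw.div_const c).abs.aemeasurable).pow hpae
  have hIntScaled : ∀ (w : (Fin n → ℝ) → ℝ), Measurable w →
      Integrable (fun x => |w x| ^ p x) (volume.restrict Q) → ∀ c : ℝ, 0 < c →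
      Integrable (fun x => |w x / c| ^ p x) (volume.restrict Q) := by
    intro w hw hwint c hc
    set b : ℝ := max c⁻¹ 1 with hbdef
    have hb1 : (1:ℝ) ≤ b := le_max_right _ _
    have hb0 : (0:ℝ) ≤ b := le_trans zero_le_one hb1
    refine ((hwint.const_mul (b ^ pM)).mono ((hmeasPow w hw c).aestronglyMeasurable)) ?_
    filter_upwards [haeQ] with x hx
    obtain ⟨hpx1, hpx2⟩ := hpb x hx
    have hic : (0:ℝ) ≤ c⁻¹ := (inv_pos.mpr hc).le
    have h2 : |w x / c| ^ p x = |w x| ^ p x * c⁻¹ ^ p x := by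
      rw [div_eq_mul_inv, abs_mul, abs_of_nonneg hic,
        Real.mul_rpow (abs_nonneg _) hic]
    have h3 : c⁻¹ ^ p x ≤ b ^ pM :=
      le_trans (Real.rpow_le_rpow hic (le_max_left _ _) (le_trans hpm0.le hpx1))
        (Real.rpow_le_rpow_of_exponent_le hb1 hpx2)
    have hwnn : (0:ℝ) ≤ |w x| ^ p x := Real.rpow_nonneg (abs_nonneg _) _
    rw [Real.norm_eq_abs, Real.norm_eq_abs, h2,
      abs_of_nonneg (mul_nonneg hwnn (Real.rpow_nonneg hic _)),
      abs_of_nonneg (mul_nonneg (Real.rpow_nonneg hb0 _) hwnn)]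
    calc |w x| ^ p x * c⁻¹ ^ p x ≤ |w x| ^ p x * b ^ pM :=
          mul_le_mul_of_nonneg_left h3 hwnn
      _ = b ^ pM * |w x| ^ p x := by ring
  obtain ⟨C, hC⟩ := hv_bdd
  set K : ℝ := max 1 (C + 1) with hKdef
  have hK1 : (1:ℝ) ≤ K := le_max_left _ _
  have hK0 : (0:ℝ) < K := lt_of_lt_of_le one_pos hK1
  -- uniform modular bound
  have hmK : ∀ j, ∫⁻ x in Q, ENNReal.ofReal (|v j x / K| ^ p x) ≤ 1 := by
    intro j
    set I : ℝ := ∫ x in Q, |v j x| ^ p x with hIdef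
    have hInn : 0 ≤ I := integral_nonneg fun x => Real.rpow_nonneg (abs_nonneg _) _
    set c₀ : ℝ := max 1 I with hc₀def
    have hc₀1 : (1:ℝ) ≤ c₀ := le_max_left _ _
    have hc₀0 : (0:ℝ) < c₀ := lt_of_lt_of_le one_pos hc₀1
    have hintc₀ : Integrable (fun x => |v j x / c₀| ^ p x) (volume.restrict Q) :=
      hIntScaled _ (hv_meas j) (hv_mem j) _ hc₀0
    have hmem0 : c₀ ∈ {c : ℝ | 0 < c ∧ modular Q p (fun x => v j x / c) ≤ 1} := by
      refine ⟨hc₀0, ?_⟩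
      have hic : (0:ℝ) ≤ c₀⁻¹ := (inv_pos.mpr hc₀0).le
      have hle : ∀ᵐ x ∂(volume.restrict Q),
          |v j x / c₀| ^ p x ≤ c₀⁻¹ * |v j x| ^ p x := by
        filter_upwards [haeQ] with x hx
        obtain ⟨hpx1, _⟩ := hpb x hx
        have h2 : |v j x / c₀| ^ p x = |v j x| ^ p x * c₀⁻¹ ^ p x := by
          rw [div_eq_mul_inv, abs_mul, abs_of_nonneg hic,
            Real.mul_rpow (abs_nonneg _) hic]
        have h3 : c₀⁻¹ ^ p x ≤ c₀⁻¹ ^ (1:ℝ) :=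
          Real.rpow_le_rpow_of_exponent_ge (inv_pos.mpr hc₀0) (inv_le_one_of_one_le₀ hc₀1)
            (le_trans hpm.le hpx1)
        rw [h2]
        calc |v j x| ^ p x * c₀⁻¹ ^ p x ≤ |v j x| ^ p x * c₀⁻¹ ^ (1:ℝ) :=
              mul_le_mul_of_nonneg_left h3 (Real.rpow_nonneg (abs_nonneg _) _)
          _ = c₀⁻¹ * |v j x| ^ p x := by rw [Real.rpow_one]; ring
      have hmod : modular Q p (fun x => v j x / c₀) ≤ c₀⁻¹ * I := by
        have h := integral_mono_ae hintc₀ ((hv_mem j).const_mul c₀⁻¹) hle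
        rw [MeasureTheory.integral_const_mul] at h
        exact h
      refine le_trans hmod ?_
      rw [← div_eq_inv_mul]
      exact div_le_one_of_le₀ (le_max_right _ _) hc₀0.le
    have hSne : Set.Nonempty {c : ℝ | 0 < c ∧ modular Q p (fun x => v j x / c) ≤ 1} :=
      ⟨c₀, hmem0⟩
    have hCK : sInf {c : ℝ | 0 < c ∧ modular Q p (fun x => v j x / c) ≤ 1} < K :=
      lt_of_le_of_lt (hC j) (lt_of_lt_of_le (lt_add_one C) (le_max_right _ _))
    obtain ⟨c, hcmem, hcK⟩ := exists_lt_of_csInf_lt hSne hCK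
    obtain ⟨hc0, hcmod⟩ := hcmem
    have hcint : Integrable (fun x => |v j x / c| ^ p x) (volume.restrict Q) :=
      hIntScaled _ (hv_meas j) (hv_mem j) _ hc0
    have h1 : ∫⁻ x in Q, ENNReal.ofReal (|v j x / c| ^ p x) ≤ 1 := by
      rw [← ofReal_integral_eq_lintegral_ofReal hcint
        (Filter.Eventually.of_forall fun x => Real.rpow_nonneg (abs_nonneg _) _)]
      exact ENNReal.ofReal_le_one.mpr hcmod
    refine le_trans (lintegral_mono_ae ?_) h1
    filter_upwards [haeQ] with x hx
    apply ENNReal.ofReal_le_ofReal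
    apply Real.rpow_le_rpow (abs_nonneg _) ?_ (le_trans hpm0.le (hpb x hx).1)
    rw [abs_div, abs_div, abs_of_pos hc0, abs_of_pos hK0]
    exact div_le_div_of_nonneg_left (abs_nonneg _) hc0 hcK.le
  have hmXmeas : ∀ (j : ℕ),
      AEMeasurable (fun x => ENNReal.ofReal (|v j x / K| ^ p x)) (volume.restrict Q) :=
    fun j => (hmeasPow _ (hv_meas j) K).ennreal_ofReal
  -- Fatou for the limit
  have hmL : ∫⁻ x in Q, ENNReal.ofReal (|vlim x / K| ^ p x) ≤ 1 := by
    have hle : ∫⁻ x in Q, ENNReal.ofReal (|vlim x / K| ^ p x)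
        ≤ ∫⁻ x in Q, Filter.liminf (fun j => ENNReal.ofReal (|v j x / K| ^ p x)) atTop := by
      refine lintegral_mono_ae ?_
      filter_upwards [hae, haeQ] with x hx hxQ
      have hpx0 : (0:ℝ) ≤ p x := le_trans hpm0.le (hpb x hxQ).1
      have h1 : Tendsto (fun j => |v j x / K|) atTop (𝓝 |vlim x / K|) :=
        (hx.div_const K).abs
      have h2 : Tendsto (fun j => |v j x / K| ^ p x) atTop (𝓝 (|vlim x / K| ^ p x)) :=
        ((Real.continuousAt_rpow_const _ _ (Or.inr hpx0)).tendsto.comp h1)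
      have h3 : Tendsto (fun j => ENNReal.ofReal (|v j x / K| ^ p x)) atTop
          (𝓝 (ENNReal.ofReal (|vlim x / K| ^ p x))) :=
        (ENNReal.continuous_ofReal.tendsto _).comp h2
      exact le_of_eq h3.liminf_eq.symm
    refine hle.trans ((lintegral_liminf_le' fun j => hmXmeas j).trans ?_)
    refine le_trans (Filter.liminf_le_liminf (Filter.Eventually.of_forall fun j => hmK j)) ?_
    simp [Filter.liminf_const]
  have hpM0 : (0:ℝ) ≤ pM := le_trans (le_trans zero_le_one hpm.le) (le_max_right _ _)
  have hKpM : (0:ℝ) ≤ K ^ pM := Real.rpow_nonneg hK0.le _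
  have hlimMod : Integrable (fun x => |vlim x| ^ p x) (volume.restrict Q) := by
    refine ⟨(hvlim_meas.abs.aemeasurable.pow hpae).aestronglyMeasurable, ?_⟩
    rw [hasFiniteIntegral_iff_ofReal
      (Filter.Eventually.of_forall fun x => Real.rpow_nonneg (abs_nonneg _) _)]
    have hb : ∫⁻ x in Q, ENNReal.ofReal (|vlim x| ^ p x)
        ≤ ∫⁻ x in Q, ENNReal.ofReal (K ^ pM) * ENNReal.ofReal (|vlim x / K| ^ p x) := by
      refine lintegral_mono_ae ?_
      filter_upwards [haeQ] with x hx
      obtain ⟨hpx1, hpx2⟩ := hpb x hx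
      rw [← ENNReal.ofReal_mul hKpM]
      refine ENNReal.ofReal_le_ofReal ?_
      have h1 : |vlim x| = K * |vlim x / K| := by
        rw [abs_div, abs_of_pos hK0]; field_simp
      rw [h1, Real.mul_rpow hK0.le (abs_nonneg _)]
      exact mul_le_mul_of_nonneg_right
        (Real.rpow_le_rpow_of_exponent_le hK1 hpx2)
        (Real.rpow_nonneg (abs_nonneg _) _)
    rw [lintegral_const_mul' _ _ ENNReal.ofReal_ne_top] at hb
    calc ∫⁻ x in Q, ENNReal.ofReal (|vlim x| ^ p x)
        ≤ ENNReal.ofReal (K ^ pM) * 1 := hb.trans (mul_le_mul_right hmL _)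
      _ < ⊤ := by rw [mul_one]; exact ENNReal.ofReal_lt_top
  refine ⟨hlimMod, ?_⟩
  intro g hg hgQ
  have hgint : Integrable (fun x => |g x| ^ pConj p x) (volume.restrict Q) := hgQ
  have hpconj_ae : AEMeasurable (pConj p) (volume.restrict Q) :=
    hpae.div (hpae.sub aemeasurable_const)
  have hconj : ∀ x ∈ Q, (p x).HolderConjugate (pConj p x) := by
    intro x hx
    have h1 : 1 < p x := lt_of_lt_of_le hpm (hpb x hx).1
    exact Real.HolderConjugate.conjExponent h1
  have hIntProd : ∀ (f : (Fin n → ℝ) → ℝ), Measurable f →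
      Integrable (fun x => |f x| ^ p x) (volume.restrict Q) →
      Integrable (fun x => f x * g x) (volume.restrict Q) := by
    intro f hf hfint
    refine (hfint.add hgint).mono ((hf.mul hg).aestronglyMeasurable) ?_
    filter_upwards [haeQ] with x hx
    have hcx := hconj x hx
    have hY := Real.young_inequality_of_nonneg (abs_nonneg (f x)) (abs_nonneg (g x)) hcx
    have h1 : |f x| ^ p x / p x ≤ |f x| ^ p x :=
      div_le_self (Real.rpow_nonneg (abs_nonneg _) _) hcx.lt.le
    have h2 : |g x| ^ pConj p x / pConj p x ≤ |g x| ^ pConj p x :=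
      div_le_self (Real.rpow_nonneg (abs_nonneg _) _) hcx.symm.lt.le
    have hrnn : 0 ≤ |f x| ^ p x + |g x| ^ pConj p x :=
      add_nonneg (Real.rpow_nonneg (abs_nonneg _) _) (Real.rpow_nonneg (abs_nonneg _) _)
    simp only [Real.norm_eq_abs, abs_mul, Pi.add_apply]
    rw [abs_of_nonneg hrnn]
    linarith
  have hint_vg : ∀ j, Integrable (fun x => v j x * g x) (volume.restrict Q) :=
    fun j => hIntProd (v j) (hv_meas j) (hv_mem j)
  have hint_lg : Integrable (fun x => vlim x * g x) (volume.restrict Q) :=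
    hIntProd vlim hvlim_meas hlimMod
  set M : ℝ := 2 * K with hMdef
  have hM0 : (0:ℝ) < M := by rw [hMdef]; positivity
  have hM1 : (1:ℝ) ≤ M := by rw [hMdef]; linarith
  have humeas : ∀ j, Measurable (fun x => v j x - vlim x) :=
    fun j => (hv_meas j).sub hvlim_meas
  have hmU : ∀ j, ∫⁻ x in Q, ENNReal.ofReal (|(v j x - vlim x) / M| ^ p x) ≤ 2 := by
    intro j
    have step : ∀ᵐ x ∂(volume.restrict Q),
        ENNReal.ofReal (|(v j x - vlim x) / M| ^ p x)
          ≤ ENNReal.ofReal (|v j x / K| ^ p x) + ENNReal.ofReal (|vlim x / K| ^ p x) := by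
      filter_upwards [haeQ] with x hx
      have hpx0 : (0:ℝ) ≤ p x := le_trans hpm0.le (hpb x hx).1
      rw [← ENNReal.ofReal_add (Real.rpow_nonneg (abs_nonneg _) _)
        (Real.rpow_nonneg (abs_nonneg _) _)]
      refine ENNReal.ofReal_le_ofReal ?_
      have h1 : |(v j x - vlim x) / M| ≤ max |v j x / K| |vlim x / K| := by
        rw [abs_div, abs_of_pos hM0, abs_div, abs_div, abs_of_pos hK0]
        have habs : |v j x - vlim x| ≤ |v j x| + |vlim x| := abs_sub _ _
        rcases le_total (|v j x|) (|vlim x|) with h | h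
        · refine le_trans ?_ (le_max_right _ _)
          rw [div_le_div_iff₀ hM0 hK0, hMdef]
          calc |v j x - vlim x| * K ≤ (2 * |vlim x|) * K :=
                mul_le_mul_of_nonneg_right (by linarith) hK0.le
            _ = |vlim x| * (2 * K) := by ring
        · refine le_trans ?_ (le_max_left _ _)
          rw [div_le_div_iff₀ hM0 hK0, hMdef]
          calc |v j x - vlim x| * K ≤ (2 * |v j x|) * K :=
                mul_le_mul_of_nonneg_right (by linarith) hK0.le
            _ = |v j x| * (2 * K) := by ring
      calc |(v j x - vlim x) / M| ^ p x ≤ (max |v j x / K| |vlim x / K|) ^ p x :=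
            Real.rpow_le_rpow (abs_nonneg _) h1 hpx0
        _ ≤ |v j x / K| ^ p x + |vlim x / K| ^ p x := by
            rcases max_cases (|v j x / K|) (|vlim x / K|) with ⟨hmx, _⟩ | ⟨hmx, _⟩ <;>
              rw [hmx]
            · exact le_add_of_nonneg_right (Real.rpow_nonneg (abs_nonneg _) _)
            · exact le_add_of_nonneg_left (Real.rpow_nonneg (abs_nonneg _) _)
    calc ∫⁻ x in Q, ENNReal.ofReal (|(v j x - vlim x) / M| ^ p x)
        ≤ ∫⁻ x in Q, (ENNReal.ofReal (|v j x / K| ^ p x)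
            + ENNReal.ofReal (|vlim x / K| ^ p x)) := lintegral_mono_ae step
      _ = (∫⁻ x in Q, ENNReal.ofReal (|v j x / K| ^ p x))
          + ∫⁻ x in Q, ENNReal.ofReal (|vlim x / K| ^ p x) :=
          lintegral_add_left' (hmXmeas j) _
      _ ≤ 1 + 1 := add_le_add (hmK j) hmL
      _ = 2 := by norm_num
  have hgabs_meas : AEMeasurable (fun x => |g x| ^ pConj p x) (volume.restrict Q) :=
    hg.abs.aemeasurable.pow hpconj_ae
  have hglint : ∫⁻ x in Q, ENNReal.ofReal (|g x| ^ pConj p x) < ⊤ := by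
    rw [← ofReal_integral_eq_lintegral_ofReal hgint
      (Filter.Eventually.of_forall fun x => Real.rpow_nonneg (abs_nonneg _) _)]
    exact ENNReal.ofReal_lt_top
  set q : ℝ := pm / (pm - 1) with hqdef
  have hpm1 : (0:ℝ) < pm - 1 := sub_pos.mpr hpm
  have hmain : Tendsto (fun j => ∫⁻ x in Q, ENNReal.ofReal |(v j x - vlim x) * g x|)
      atTop (𝓝 0) := by
    rw [ENNReal.tendsto_atTop_zero]
    intro ε hε
    set ε' : ℝ≥0∞ := min ε 1 with hε'def
    have hε'0 : 0 < ε' := lt_min hε zero_lt_one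
    have hε'top : ε' ≠ ⊤ := ne_top_of_le_ne_top ENNReal.one_ne_top (min_le_right _ _)
    set η : ℝ := ε'.toReal with hηdef
    have hη0 : 0 < η := ENNReal.toReal_pos hε'0.ne' hε'top
    set δ : ℝ := min 1 ((η / (8 * M)) ^ pm⁻¹) with hδdef
    have hδ0 : 0 < δ := lt_min one_pos (Real.rpow_pos_of_pos (by positivity) _)
    have hδ1 : δ ≤ 1 := min_le_left _ _
    have hδpm : 2 * (M * δ ^ pm) ≤ η / 4 := by
      have h1 : δ ^ pm ≤ η / (8 * M) := by
        calc δ ^ pm ≤ ((η / (8 * M)) ^ pm⁻¹) ^ pm :=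
              Real.rpow_le_rpow hδ0.le (min_le_right _ _) hpm0.le
          _ = η / (8 * M) := by
              rw [← Real.rpow_mul (by positivity), inv_mul_cancel₀ hpm0.ne', Real.rpow_one]
      have h2 := mul_le_mul_of_nonneg_left h1 (by positivity : (0:ℝ) ≤ 2 * M)
      have h3 : 2 * M * (η / (8 * M)) = η / 4 := by
        field_simp
        ring
      linarith
    set c₂ : ℝ := M * δ⁻¹ ^ q with hc₂def
    have hc₂0 : 0 ≤ c₂ := by
      rw [hc₂def]
      positivity
    set A : ℕ → Set (Fin n → ℝ) :=
      fun m => {y | |g y| ≤ (m:ℝ)} ∩ Metric.closedBall 0 (m:ℝ) with hAdef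
    have hAmeas : ∀ m, MeasurableSet (A m) := fun m =>
      (measurableSet_le hg.abs measurable_const).inter measurableSet_closedBall
    set ψ : ℕ → (Fin n → ℝ) → ℝ :=
      fun m => (A m)ᶜ.indicator (fun y => |g y| ^ pConj p y) with hψdef
    have hψnn : ∀ m x, 0 ≤ ψ m x := fun m x =>
      Set.indicator_nonneg (fun y _ => Real.rpow_nonneg (abs_nonneg _) _) _
    have hψle : ∀ m x, ψ m x ≤ |g x| ^ pConj p x := fun m x =>
      Set.indicator_le_self' (fun y _ => Real.rpow_nonneg (abs_nonneg _) _) x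
    have hψmeas : ∀ m, AEMeasurable (fun x => ENNReal.ofReal (ψ m x)) (volume.restrict Q) :=
      fun m => ((hgabs_meas.indicator (hAmeas m).compl)).ennreal_ofReal
    have hS : Tendsto (fun m => ∫⁻ x in Q, ENNReal.ofReal (ψ m x)) atTop (𝓝 0) := by
      have hdc := tendsto_lintegral_of_dominated_convergence'
        (μ := volume.restrict Q)
        (F := fun m x => ENNReal.ofReal (ψ m x)) (f := fun _ => 0)
        (bound := fun x => ENNReal.ofReal (|g x| ^ pConj p x))
        hψmeas
        (fun m => Filter.Eventually.of_forall fun x =>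
          ENNReal.ofReal_le_ofReal (hψle m x))
        hglint.ne
        ?_
      · simpa using hdc
      · refine Filter.Eventually.of_forall fun x => ?_
        obtain ⟨m₀, hm₀⟩ := exists_nat_ge (max |g x| ‖x‖)
        refine tendsto_const_nhds.congr' ?_
        filter_upwards [eventually_ge_atTop m₀] with m hm
        have hmm : (m₀:ℝ) ≤ (m:ℝ) := by exact_mod_cast hm
        have hxA : x ∈ A m := by
          constructor
          · exact le_trans (le_trans (le_max_left _ _) hm₀) hmm
          · rw [mem_closedBall_zero_iff]
            exact le_trans (le_trans (le_max_right _ _) hm₀) hmm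
        have : ψ m x = 0 := Set.indicator_of_notMem (Set.notMem_compl_iff.mpr hxA) _
        simp [this]
    have hS2 : Tendsto (fun m => ENNReal.ofReal c₂ * ∫⁻ x in Q, ENNReal.ofReal (ψ m x))
        atTop (𝓝 0) := by
      have := ENNReal.Tendsto.const_mul (a := ENNReal.ofReal c₂) hS (Or.inr ENNReal.ofReal_ne_top)
      simpa using this
    have hη4 : (0:ℝ≥0∞) < ENNReal.ofReal (η / 4) := ENNReal.ofReal_pos.mpr (by positivity)
    obtain ⟨m, hm1, hmS⟩ := ((eventually_ge_atTop 1).and (hS2.eventually_lt_const hη4)).exists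
    have hm0 : (0:ℝ) < (m:ℝ) := by exact_mod_cast hm1
    set t : ℝ := max 1 ((8 * (m:ℝ) * M / η) ^ (pm - 1)⁻¹) with htdef
    have ht1 : (1:ℝ) ≤ t := le_max_left _ _
    have ht0 : (0:ℝ) < t := lt_of_lt_of_le one_pos ht1
    have htkey : 2 * ((m:ℝ) * M * t ^ (1 - pm)) ≤ η / 4 := by
      have h8 : (0:ℝ) < 8 * (m:ℝ) * M / η := by positivity
      have h1 : 8 * (m:ℝ) * M / η ≤ t ^ (pm - 1) := by
        calc (8*(m:ℝ)*M/η) = ((8*(m:ℝ)*M/η) ^ (pm-1)⁻¹) ^ (pm - 1) := by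
              rw [← Real.rpow_mul h8.le, inv_mul_cancel₀ hpm1.ne', Real.rpow_one]
          _ ≤ t ^ (pm - 1) := Real.rpow_le_rpow (by positivity) (le_max_right _ _) hpm1.le
      have h2 : t ^ (1 - pm) = (t ^ (pm - 1))⁻¹ := by
        rw [show (1 - pm) = -(pm-1) by ring, Real.rpow_neg ht0.le]
      have h3 : (t ^ (pm-1))⁻¹ ≤ (8*(m:ℝ)*M/η)⁻¹ := inv_anti₀ h8 h1
      have h4 : (8*(m:ℝ)*M/η)⁻¹ = η / (8*(m:ℝ)*M) := by
        field_simp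
      have h6 : t ^ (1 - pm) ≤ η / (8*(m:ℝ)*M) := by rw [h2, ← h4]; exact h3
      have h7 := mul_le_mul_of_nonneg_left h6 (mul_nonneg hm0.le hM0.le)
      have h5 : 2 * ((m:ℝ) * M * (η / (8*(m:ℝ)*M))) = η / 4 := by
        field_simp
        ring
      linarith [h7]
    set c₁ : ℝ := M * δ ^ pm + (m:ℝ) * M * t ^ (1 - pm) with hc₁def
    have hc₁0 : 0 ≤ c₁ := by
      rw [hc₁def]
      have h1 : (0:ℝ) ≤ M * δ ^ pm := mul_nonneg hM0.le (Real.rpow_nonneg hδ0.le _)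
      have h2 : (0:ℝ) ≤ (m:ℝ) * M * t ^ (1 - pm) :=
        mul_nonneg (mul_nonneg hm0.le hM0.le) (Real.rpow_nonneg ht0.le _)
      linarith
    set B : Set (Fin n → ℝ) := Metric.closedBall 0 (m:ℝ) with hBdef
    set φ : ℕ → (Fin n → ℝ) → ℝ :=
      fun j => B.indicator (fun y => (m:ℝ) * min |v j y - vlim y| (M * t)) with hφdef
    have hφnn : ∀ j x, 0 ≤ φ j x := fun j x =>
      Set.indicator_nonneg (fun y _ => by positivity) _
    have hφmeas : ∀ j, AEMeasurable (fun x => ENNReal.ofReal (φ j x)) (volume.restrict Q) := by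
      intro j
      refine (AEMeasurable.indicator ?_ measurableSet_closedBall).ennreal_ofReal
      exact (measurable_const.mul ((humeas j).abs.min measurable_const)).aemeasurable
    have hφbound : ∀ j, ∀ x, ENNReal.ofReal (φ j x)
        ≤ B.indicator (fun _ => ENNReal.ofReal ((m:ℝ) * (M * t))) x := by
      intro j x
      by_cases hxB : x ∈ B
      · rw [hφdef]
        simp only [Set.indicator_of_mem hxB]
        exact ENNReal.ofReal_le_ofReal (mul_le_mul_of_nonneg_left (min_le_right _ _) hm0.le)
      · simp [hφdef, Set.indicator_of_notMem hxB]
    have hBmeas : MeasurableSet B := measurableSet_closedBall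
    have hBfin : volume.restrict Q B < ⊤ :=
      lt_of_le_of_lt (Measure.restrict_apply_le _ _)
        ((isCompact_closedBall (0 : Fin n → ℝ) (m:ℝ)).measure_lt_top)
    have hbound_fin : ∫⁻ x in Q, B.indicator (fun _ => ENNReal.ofReal ((m:ℝ) * (M*t))) x ≠ ⊤ := by
      rw [lintegral_indicator_const hBmeas]
      exact ENNReal.mul_ne_top ENNReal.ofReal_ne_top hBfin.ne
    have hφtend : Tendsto (fun j => ∫⁻ x in Q, ENNReal.ofReal (φ j x)) atTop (𝓝 0) := by
      have hdc := tendsto_lintegral_of_dominated_convergence'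
        (μ := volume.restrict Q)
        (F := fun j x => ENNReal.ofReal (φ j x)) (f := fun _ => 0)
        (bound := fun x => B.indicator (fun _ => ENNReal.ofReal ((m:ℝ) * (M*t))) x)
        hφmeas
        (fun j => Filter.Eventually.of_forall (hφbound j))
        hbound_fin
        ?_
      · simpa using hdc
      · filter_upwards [hae] with x hx
        by_cases hxB : x ∈ B
        · have h1 : Tendsto (fun j => v j x - vlim x) atTop (𝓝 0) := by
            have h0 : Tendsto (fun _ : ℕ => vlim x) atTop (𝓝 (vlim x)) := tendsto_const_nhds
            simpa using hx.sub h0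
          have h2 : Tendsto (fun j => (m:ℝ) * min |v j x - vlim x| (M*t)) atTop
              (𝓝 ((m:ℝ) * min |(0:ℝ)| (M*t))) :=
            (h1.abs.min tendsto_const_nhds).const_mul _
          have h4 : Tendsto (fun j => ENNReal.ofReal ((m:ℝ) * min |v j x - vlim x| (M*t)))
              atTop (𝓝 (ENNReal.ofReal ((m:ℝ) * min |(0:ℝ)| (M*t)))) :=
            (ENNReal.continuous_ofReal.tendsto _).comp h2
          have h5 : ENNReal.ofReal ((m:ℝ) * min |(0:ℝ)| (M*t)) = 0 := by
            rw [abs_zero, min_eq_left (by positivity : (0:ℝ) ≤ M*t)]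
            simp
          rw [h5] at h4
          refine h4.congr fun j => ?_
          rw [hφdef]
          simp only [Set.indicator_of_mem hxB]
        · have : ∀ j, φ j x = 0 := fun j => Set.indicator_of_notMem hxB _
          simp only [this, ENNReal.ofReal_zero]
          exact tendsto_const_nhds
    obtain ⟨N, hN⟩ := eventually_atTop.mp (hφtend.eventually_lt_const hη4)
    refine ⟨N, fun j hj => ?_⟩
    -- pointwise key inequality
    have hkey : ∀ᵐ x ∂(volume.restrict Q),
        ENNReal.ofReal |(v j x - vlim x) * g x|
          ≤ ENNReal.ofReal (c₁ * |(v j x - vlim x) / M| ^ p x)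
            + ENNReal.ofReal (c₂ * ψ m x) + ENNReal.ofReal (φ j x) := by
      filter_upwards [haeQ] with x hx
      obtain ⟨hpx1, hpx2⟩ := hpb x hx
      have hpx0 : (0:ℝ) ≤ p x := le_trans hpm0.le hpx1
      have hpxgt1 : (1:ℝ) < p x := lt_of_lt_of_le hpm hpx1
      have hw0 : 0 ≤ |(v j x - vlim x) / M| := abs_nonneg _
      have hwa : |v j x - vlim x| = M * |(v j x - vlim x) / M| := by
        rw [abs_div, abs_of_pos hM0]
        field_simp
      have hwp0 : 0 ≤ |(v j x - vlim x) / M| ^ p x := Real.rpow_nonneg hw0 _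
      have key : |(v j x - vlim x) * g x|
          ≤ c₁ * |(v j x - vlim x) / M| ^ p x + c₂ * ψ m x + φ j x := by
        rw [abs_mul]
        by_cases hxA : x ∈ A m
        · have hψ0 : ψ m x = 0 :=
            Set.indicator_of_notMem (Set.notMem_compl_iff.mpr hxA) _
          have hgm : |g x| ≤ (m:ℝ) := hxA.1
          have hφx : φ j x = (m:ℝ) * min |v j x - vlim x| (M * t) := by
            rw [hφdef]
            exact Set.indicator_of_mem hxA.2 _
          by_cases hwt : |v j x - vlim x| ≤ M * t
          · have h1 : |v j x - vlim x| * |g x| ≤ (m:ℝ) * min |v j x - vlim x| (M*t) := by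
              rw [min_eq_left hwt]
              calc |v j x - vlim x| * |g x| ≤ |v j x - vlim x| * (m:ℝ) :=
                    mul_le_mul_of_nonneg_left hgm (abs_nonneg _)
                _ = (m:ℝ) * |v j x - vlim x| := by ring
            rw [hψ0, hφx]
            have h2 : 0 ≤ c₁ * |(v j x - vlim x) / M| ^ p x := mul_nonneg hc₁0 hwp0
            linarith
          · push_neg at hwt
            have hwt' : t < |(v j x - vlim x) / M| := by
              rw [hwa] at hwt
              have := (mul_lt_mul_iff_right₀ hM0).mp hwt
              exact this
            have hw1 : (1:ℝ) ≤ |(v j x - vlim x) / M| := le_trans ht1 hwt'.le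
            have hwpos : (0:ℝ) < |(v j x - vlim x) / M| := lt_of_lt_of_le one_pos hw1
            have hww : |(v j x - vlim x) / M|
                ≤ t ^ (1 - pm) * |(v j x - vlim x) / M| ^ p x := by
              have e1 : |(v j x - vlim x) / M| ^ pm ≤ |(v j x - vlim x) / M| ^ p x :=
                Real.rpow_le_rpow_of_exponent_le hw1 hpx1
              have e0 : |(v j x - vlim x) / M| ^ pm
                  = |(v j x - vlim x) / M| ^ (pm - 1) * |(v j x - vlim x) / M| := by
                have h := Real.rpow_add hwpos (pm - 1) 1
                rw [Real.rpow_one] at h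
                calc |(v j x - vlim x) / M| ^ pm
                    = |(v j x - vlim x) / M| ^ (pm - 1 + 1) := by congr 1; ring
                  _ = |(v j x - vlim x) / M| ^ (pm - 1) * |(v j x - vlim x) / M| := h
              have e2 : t ^ (pm - 1) * |(v j x - vlim x) / M|
                  ≤ |(v j x - vlim x) / M| ^ pm := by
                rw [e0]
                exact mul_le_mul_of_nonneg_right
                  (Real.rpow_le_rpow ht0.le hwt'.le hpm1.le) hw0
              have e3 : t ^ (pm - 1) * |(v j x - vlim x) / M|
                  ≤ |(v j x - vlim x) / M| ^ p x := le_trans e2 e1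
              have ht1pm : (0:ℝ) < t ^ (1 - pm) := Real.rpow_pos_of_pos ht0 _
              have htinv : t ^ (1 - pm) * t ^ (pm - 1) = 1 := by
                rw [← Real.rpow_add ht0]
                norm_num
              have e4 : t ^ (1-pm) * (t ^ (pm-1) * |(v j x - vlim x) / M|)
                  = |(v j x - vlim x) / M| := by
                rw [← mul_assoc, htinv, one_mul]
              have e5 := mul_le_mul_of_nonneg_left e3 ht1pm.le
              linarith [e5, e4]
            have h1 : |v j x - vlim x| * |g x| ≤ (m:ℝ) * (M * |(v j x - vlim x) / M|) := by
              rw [← hwa]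
              calc |v j x - vlim x| * |g x| ≤ |v j x - vlim x| * (m:ℝ) :=
                    mul_le_mul_of_nonneg_left hgm (abs_nonneg _)
                _ = (m:ℝ) * |v j x - vlim x| := by ring
            have h2 : (m:ℝ) * (M * |(v j x - vlim x) / M|)
                ≤ (m:ℝ) * M * t ^ (1-pm) * |(v j x - vlim x) / M| ^ p x := by
              have h2a := mul_le_mul_of_nonneg_left hww
                (by positivity : (0:ℝ) ≤ (m:ℝ) * M)
              linarith [h2a]
            have h3 : (m:ℝ) * M * t ^ (1-pm) * |(v j x - vlim x) / M| ^ p x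
                ≤ c₁ * |(v j x - vlim x) / M| ^ p x := by
              refine mul_le_mul_of_nonneg_right ?_ hwp0
              rw [hc₁def]
              exact le_add_of_nonneg_left (by positivity)
            rw [hψ0]
            have h4 := hφnn j x
            linarith
        · have hψx : ψ m x = |g x| ^ pConj p x :=
            Set.indicator_of_mem (Set.mem_compl hxA) _
          have hcx := hconj x hx
          have hY := Real.young_inequality_of_nonneg
            (mul_nonneg hδ0.le hw0) (div_nonneg (abs_nonneg (g x)) hδ0.le) hcx
          have hprod : (δ * |(v j x - vlim x) / M|) * (|g x| / δ)
              = |(v j x - vlim x) / M| * |g x| := by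
            field_simp
          have hd1 : (δ * |(v j x - vlim x) / M|) ^ p x / p x
              ≤ (δ * |(v j x - vlim x) / M|) ^ p x :=
            div_le_self (Real.rpow_nonneg (by positivity) _) hpxgt1.le
          have hd2 : (|g x|/δ) ^ pConj p x / pConj p x ≤ (|g x|/δ) ^ pConj p x :=
            div_le_self (Real.rpow_nonneg (by positivity) _) hcx.symm.lt.le
          have hY2 : |(v j x - vlim x) / M| * |g x|
              ≤ (δ * |(v j x - vlim x) / M|) ^ p x + (|g x|/δ) ^ pConj p x := by
            rw [← hprod]
            linarith
          have hsplit1 : (δ * |(v j x - vlim x) / M|) ^ p x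
              = δ ^ p x * |(v j x - vlim x) / M| ^ p x := Real.mul_rpow hδ0.le hw0
          have hsplit2 : (|g x|/δ) ^ pConj p x
              = |g x| ^ pConj p x * δ⁻¹ ^ pConj p x := by
            rw [div_eq_mul_inv, Real.mul_rpow (abs_nonneg _) (inv_nonneg.mpr hδ0.le)]
          have hδp : δ ^ p x ≤ δ ^ pm :=
            Real.rpow_le_rpow_of_exponent_ge hδ0 hδ1 hpx1
          have hδinv1 : (1:ℝ) ≤ δ⁻¹ := one_le_inv_iff₀.mpr ⟨hδ0, hδ1⟩
          have hδq : δ⁻¹ ^ pConj p x ≤ δ⁻¹ ^ q := by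
            refine Real.rpow_le_rpow_of_exponent_le hδinv1 ?_
            rw [hqdef]
            show p x / (p x - 1) ≤ pm / (pm - 1)
            rw [div_le_div_iff₀ (by linarith) hpm1]
            nlinarith [hpx1, hpm0]
          have hM_y := mul_le_mul_of_nonneg_left hY2 hM0.le
          have hfin1 : |v j x - vlim x| * |g x|
              = M * (|(v j x - vlim x) / M| * |g x|) := by
            rw [hwa]
            ring
          have hgnn : 0 ≤ |g x| ^ pConj p x := Real.rpow_nonneg (abs_nonneg _) _
          have hb1 : M * ((δ * |(v j x - vlim x) / M|) ^ p x)
              ≤ M * δ ^ pm * |(v j x - vlim x) / M| ^ p x := by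
            rw [hsplit1]
            have hcmb := mul_le_mul_of_nonneg_left
              (mul_le_mul_of_nonneg_right hδp hwp0) hM0.le
            linarith [hcmb]
          have hb2 : M * ((|g x|/δ) ^ pConj p x) ≤ c₂ * (|g x| ^ pConj p x) := by
            rw [hsplit2, hc₂def]
            have hcmb := mul_le_mul_of_nonneg_left
              (mul_le_mul_of_nonneg_left hδq hgnn) hM0.le
            linarith [hcmb]
          have hc₁' : M * δ ^ pm * |(v j x - vlim x) / M| ^ p x
              ≤ c₁ * |(v j x - vlim x) / M| ^ p x := by
            refine mul_le_mul_of_nonneg_right ?_ hwp0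
            rw [hc₁def]
            refine le_add_of_nonneg_right ?_
            have : (0:ℝ) ≤ t ^ (1-pm) := Real.rpow_nonneg ht0.le _
            positivity
          rw [hψx]
          have h4 := hφnn j x
          linarith [hM_y, hb1, hb2, hc₁', hfin1]
      have hnn1 : 0 ≤ c₁ * |(v j x - vlim x) / M| ^ p x := mul_nonneg hc₁0 hwp0
      have hnn2 : 0 ≤ c₂ * ψ m x := mul_nonneg hc₂0 (hψnn m x)
      calc ENNReal.ofReal |(v j x - vlim x) * g x|
          ≤ ENNReal.ofReal (c₁ * |(v j x - vlim x) / M| ^ p x + c₂ * ψ m x + φ j x) :=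
            ENNReal.ofReal_le_ofReal key
        _ = ENNReal.ofReal (c₁ * |(v j x - vlim x) / M| ^ p x)
            + ENNReal.ofReal (c₂ * ψ m x) + ENNReal.ofReal (φ j x) := by
            rw [ENNReal.ofReal_add (add_nonneg hnn1 hnn2) (hφnn j x),
              ENNReal.ofReal_add hnn1 hnn2]
    have hwmeas : AEMeasurable
        (fun x => ENNReal.ofReal (c₁ * |(v j x - vlim x) / M| ^ p x)) (volume.restrict Q) :=
      (aemeasurable_const.mul (hmeasPow _ (humeas j) M)).ennreal_ofReal
    have hψmeas' : AEMeasurable (fun x => ENNReal.ofReal (c₂ * ψ m x)) (volume.restrict Q) :=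
      (aemeasurable_const.mul (hgabs_meas.indicator (hAmeas m).compl)).ennreal_ofReal
    have e1 : ∫⁻ x in Q, ENNReal.ofReal (c₁ * |(v j x - vlim x) / M| ^ p x)
        = ENNReal.ofReal c₁ * ∫⁻ x in Q, ENNReal.ofReal (|(v j x - vlim x) / M| ^ p x) := by
      rw [← lintegral_const_mul' _ _ ENNReal.ofReal_ne_top]
      congr 1
      funext x
      rw [ENNReal.ofReal_mul hc₁0]
    have e2 : ∫⁻ x in Q, ENNReal.ofReal (c₂ * ψ m x)
        = ENNReal.ofReal c₂ * ∫⁻ x in Q, ENNReal.ofReal (ψ m x) := by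
      rw [← lintegral_const_mul' _ _ ENNReal.ofReal_ne_top]
      congr 1
      funext x
      rw [ENNReal.ofReal_mul hc₂0]
    calc ∫⁻ x in Q, ENNReal.ofReal |(v j x - vlim x) * g x|
        ≤ ∫⁻ x in Q, (ENNReal.ofReal (c₁ * |(v j x - vlim x) / M| ^ p x)
            + ENNReal.ofReal (c₂ * ψ m x) + ENNReal.ofReal (φ j x)) :=
          lintegral_mono_ae hkey
      _ = (∫⁻ x in Q, ENNReal.ofReal (c₁ * |(v j x - vlim x) / M| ^ p x))
          + (∫⁻ x in Q, ENNReal.ofReal (c₂ * ψ m x))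
          + ∫⁻ x in Q, ENNReal.ofReal (φ j x) := by
          rw [lintegral_add_left' (f := fun x => ENNReal.ofReal (c₁ * |(v j x - vlim x) / M| ^ p x) + ENNReal.ofReal (c₂ * ψ m x)) (hwmeas.add hψmeas') _, lintegral_add_left' hwmeas _]
      _ ≤ ENNReal.ofReal c₁ * 2 + ENNReal.ofReal (η/4) + ENNReal.ofReal (η/4) := by
          refine add_le_add (add_le_add ?_ ?_) ?_
          · rw [e1]
            exact mul_le_mul_right (hmU j) _
          · rw [e2]
            exact (le_of_lt hmS)
          · exact (hN j hj).le
      _ ≤ ENNReal.ofReal (η/2) + ENNReal.ofReal (η/4) + ENNReal.ofReal (η/4) := by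
          refine add_le_add (add_le_add ?_ le_rfl) le_rfl
          have h2 : ENNReal.ofReal c₁ * 2 = ENNReal.ofReal (c₁ * 2) := by
            rw [ENNReal.ofReal_mul hc₁0]
            norm_num
          rw [h2]
          apply ENNReal.ofReal_le_ofReal
          rw [hc₁def]
          linarith [hδpm, htkey]
      _ = ENNReal.ofReal η := by
          rw [← ENNReal.ofReal_add (by positivity) (by positivity),
            ← ENNReal.ofReal_add (by positivity) (by positivity)]
          congr 1
          ring
      _ = ε' := by rw [hηdef, ENNReal.ofReal_toReal hε'top]
      _ ≤ ε := min_le_left _ _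
  have htoReal : Tendsto
      (fun j => (∫⁻ x in Q, ENNReal.ofReal |(v j x - vlim x) * g x|).toReal) atTop (𝓝 0) := by
    have := (ENNReal.tendsto_toReal (by simp : (0:ℝ≥0∞) ≠ ⊤)).comp hmain
    simpa [Function.comp_def] using this
  rw [← tendsto_sub_nhds_zero_iff]
  apply squeeze_zero_norm _ htoReal
  intro j
  rw [← integral_sub (hint_vg j) hint_lg]
  have heq : (fun x => v j x * g x - vlim x * g x) = fun x => (v j x - vlim x) * g x := by
    funext x
    ring
  rw [heq]
  have hnn : 0 ≤ᵐ[volume.restrict Q] fun x => |(v j x - vlim x) * g x| :=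
    Filter.Eventually.of_forall fun x => abs_nonneg _
  have hmeas : AEStronglyMeasurable (fun x => |(v j x - vlim x) * g x|) (volume.restrict Q) :=
    ((humeas j).mul hg).abs.aestronglyMeasurable
  calc ‖∫ x in Q, (v j x - vlim x) * g x‖
      ≤ ∫ x in Q, ‖(v j x - vlim x) * g x‖ := norm_integral_le_integral_norm _
    _ = ∫ x in Q, |(v j x - vlim x) * g x| := by simp only [Real.norm_eq_abs]
    _ = (∫⁻ x in Q, ENNReal.ofReal |(v j x - vlim x) * g x|).toReal :=
        integral_eq_lintegral_of_nonneg_ae hnn hmeas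
end
end
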